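/- Let a, b ∈ G∖N with d(a*, b*) > 4 and N(a) ⊆ N(b). Then: (1) if 1 ∈ N(a), then 1 ∈ N(b) and −1 ∈ N(b); (2) for every n ∈ N∖N(b), one has N(a) ⊆ N(a + n), −N(a) ⊆ N(b + n), and N(a) ⊆ N(b + n). -/

import Mathlib

open scoped Pointwise

/-- The subset of `D` consisting of (the values of) the units belonging to `N`. -/
def unitsSet {D : Type*} [DivisionRing D] (N : Subgroup Dˣ) : Set D :=
  Units.val '' (N : Set Dˣ)

/-- For `a : D`, the set `N(a) = {n ∈ N : a + n ∈ N}`. -/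
def nSet {D : Type*} [DivisionRing D] (N : Subgroup Dˣ) (a : D) : Set D :=
  {x : D | x ∈ unitsSet N ∧ a + x ∈ unitsSet N}

/-- The commuting graph of a group: vertices are the nonidentity elements,
two distinct nonidentity elements are adjacent iff they commute. (The identity is
an isolated vertex.) -/
def commGraph (Q : Type*) [Group Q] : SimpleGraph Q where
  Adj a b := a ≠ b ∧ a ≠ 1 ∧ b ≠ 1 ∧ a * b = b * a
  symm := by
    constructor
    intro a b h
    exact ⟨Ne.symm h.1, h.2.2.1, h.2.1, h.2.2.2.symm⟩
  loopless := by constructor; intro a h; exact h.1 rfl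

/-- `distGT Γ u v k` : there is no path (walk) of length at most `k` from `u` to `v`,
i.e. `d(u,v) > k`. -/
def distGT {Q : Type*} (Γ : SimpleGraph Q) (u v : Q) (k : ℕ) : Prop :=
  ∀ p : Γ.Walk u v, k < p.length

section Aux

variable {D : Type*} [DivisionRing D] (N : Subgroup Dˣ)

lemma coe_mem_unitsSet_iff {x : Dˣ} : (x : D) ∈ unitsSet N ↔ x ∈ N := by
  constructor
  · rintro ⟨u, hu, he⟩
    rwa [show u = x from Units.ext he] at hu
  · intro h; exact ⟨x, h, rfl⟩

lemma unitsSet_ne_zero {x : D} (h : x ∈ unitsSet N) : x ≠ 0 := by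
  obtain ⟨u, -, rfl⟩ := h; exact u.ne_zero

-- The class in `Dˣ ⧸ N` of a (nonzero) element of `D`.
open Classical in
noncomputable def clq [N.Normal] (x : D) : Dˣ ⧸ N :=
  if hx : x = 0 then 1 else QuotientGroup.mk (Units.mk0 x hx)

lemma clq_of_ne [N.Normal] {x : D} (hx : x ≠ 0) :
    clq N x = QuotientGroup.mk (Units.mk0 x hx) := dif_neg hx

lemma clq_coe [N.Normal] (u : Dˣ) : clq N (u : D) = QuotientGroup.mk u := by
  rw [clq_of_ne N u.ne_zero]
  congr 1
  exact Units.ext (by simp)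

lemma clq_ne_one [N.Normal] {x : D} (hx : x ≠ 0) (h : x ∉ unitsSet N) :
    clq N x ≠ 1 := by
  rw [clq_of_ne N hx]
  intro hone
  exact h ⟨Units.mk0 x hx, (QuotientGroup.eq_one_iff _).mp hone, rfl⟩

lemma neg_one_mem (hF : ∀ x : Dˣ, (x : D) ∈ Set.center D → x ∈ N) :
    (-1 : Dˣ) ∈ N := by
  apply hF
  have : ((-1 : Dˣ) : D) = (-1 : D) := by simp
  rw [this]
  rw [Semigroup.mem_center_iff]
  intro g
  rw [mul_neg_one, neg_one_mul]

lemma unitsSet_neg (hneg1 : (-1 : Dˣ) ∈ N) {x : D} (h : x ∈ unitsSet N) :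
    -x ∈ unitsSet N := by
  obtain ⟨u, hu, rfl⟩ := h
  exact ⟨(-1) * u, N.mul_mem hneg1 hu, by simp⟩

lemma clq_neg [N.Normal] (hneg1 : (-1 : Dˣ) ∈ N) {x : D} (hx : x ≠ 0) :
    clq N (-x) = clq N x := by
  have hnx : (-x : D) ≠ 0 := neg_ne_zero.mpr hx
  rw [clq_of_ne N hnx, clq_of_ne N hx]
  have hu : Units.mk0 (-x) hnx = (-1) * Units.mk0 x hx := Units.ext (by simp)
  rw [hu]
  have : (QuotientGroup.mk ((-1 : Dˣ) * Units.mk0 x hx) : Dˣ ⧸ N)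
      = QuotientGroup.mk (-1 : Dˣ) * QuotientGroup.mk (Units.mk0 x hx) := rfl
  rw [this, (QuotientGroup.eq_one_iff _).mpr hneg1, one_mul]

/-- Key commutation lemma: if `x - y ∈ N` (as a set in `D`) then the classes of
`x` and `y` commute in `Dˣ ⧸ N`. -/
lemma clq_comm_of_sub_mem [N.Normal] {x y : D} (hx : x ≠ 0) (hy : y ≠ 0)
    (h : x - y ∈ unitsSet N) :
    clq N x * clq N y = clq N y * clq N x := by
  obtain ⟨u, huN, hu⟩ := h
  have hyx : x = y + (u : D) := by rw [hu]; abel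
  have key : (Units.mk0 x hx) * (u⁻¹ * Units.mk0 y hy)
      = (Units.mk0 y hy * u⁻¹) * (Units.mk0 x hx) := by
    apply Units.ext
    have hc : (u : D) ≠ 0 := u.ne_zero
    simp only [Units.val_mul, Units.val_inv_eq_inv_val, Units.val_mk0]
    rw [hyx, add_mul, mul_add]
    rw [← mul_assoc (u : D) ((u : D))⁻¹ y, mul_inv_cancel₀ hc, one_mul]
    rw [mul_assoc y ((u : D))⁻¹ ((u : D)), inv_mul_cancel₀ hc, mul_one]
    rw [mul_assoc]
  have h1 : (QuotientGroup.mk (u⁻¹) : Dˣ ⧸ N) = 1 :=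
    (QuotientGroup.eq_one_iff _).mpr (inv_mem huN)
  have hq := congrArg (QuotientGroup.mk : Dˣ → Dˣ ⧸ N) key
  have e1 : (QuotientGroup.mk ((Units.mk0 x hx) * (u⁻¹ * Units.mk0 y hy)) : Dˣ ⧸ N)
      = QuotientGroup.mk (Units.mk0 x hx) *
        (QuotientGroup.mk (u⁻¹) * QuotientGroup.mk (Units.mk0 y hy)) := rfl
  have e2 : (QuotientGroup.mk ((Units.mk0 y hy * u⁻¹) * (Units.mk0 x hx)) : Dˣ ⧸ N)
      = (QuotientGroup.mk (Units.mk0 y hy) * QuotientGroup.mk (u⁻¹)) *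
        QuotientGroup.mk (Units.mk0 x hx) := rfl
  rw [e1, e2, h1, one_mul, mul_one] at hq
  rw [clq_of_ne N hx, clq_of_ne N hy]
  exact hq

lemma clq_comm_of_add_mem [N.Normal] (hneg1 : (-1 : Dˣ) ∈ N) {x y : D}
    (hx : x ≠ 0) (hy : y ≠ 0) (h : x + y ∈ unitsSet N) :
    clq N x * clq N y = clq N y * clq N x := by
  have hny : (-y : D) ≠ 0 := neg_ne_zero.mpr hy
  have h' : x - (-y) ∈ unitsSet N := by rwa [sub_neg_eq_add]
  have := clq_comm_of_sub_mem N hx hny h'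
  rwa [clq_neg N hneg1 hy] at this

end Aux

section Walks

variable {Q : Type*} [Group Q]

lemma exists_short_walk {u v : Q} (hu : u ≠ 1) (hv : v ≠ 1) (h : u * v = v * u) :
    ∃ p : (commGraph Q).Walk u v, p.length ≤ 1 := by
  by_cases he : u = v
  · subst he; exact ⟨SimpleGraph.Walk.nil, by simp⟩
  · exact ⟨SimpleGraph.Walk.cons (show (commGraph Q).Adj u v from ⟨he, hu, hv, h⟩) SimpleGraph.Walk.nil, by simp⟩

lemma no_chain4 {A B : Q} (hd : distGT (commGraph Q) A B 4)
    (hA : A ≠ 1) (hB : B ≠ 1) (x1 x2 x3 : Q)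
    (h1 : x1 ≠ 1) (h2 : x2 ≠ 1) (h3 : x3 ≠ 1)
    (e0 : A * x1 = x1 * A) (e1 : x1 * x2 = x2 * x1)
    (e2 : x2 * x3 = x3 * x2) (e3 : x3 * B = B * x3) : False := by
  obtain ⟨p0, l0⟩ := exists_short_walk hA h1 e0
  obtain ⟨p1, l1⟩ := exists_short_walk h1 h2 e1
  obtain ⟨p2, l2⟩ := exists_short_walk h2 h3 e2
  obtain ⟨p3, l3⟩ := exists_short_walk h3 hB e3
  have := hd (p0.append (p1.append (p2.append p3)))
  simp only [SimpleGraph.Walk.length_append] at this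
  omega

end Walks

/-- Let `a, b ∈ G∖N` with `d(a*, b*) > 4` and `N(a) ⊆ N(b)`.
Then: (1) if `1 ∈ N(a)` then `1, −1 ∈ N(b)`; (2) for every `n ∈ N∖N(b)`,
`N(a) ⊆ N(a + n)`, `−N(a) ⊆ N(b + n)` and `N(a) ⊆ N(b + n)`. -/
theorem stmt_6 {D : Type*} [DivisionRing D] [Infinite D] (N : Subgroup Dˣ)
    [N.Normal] (hF : ∀ x : Dˣ, (x : D) ∈ Set.center D → x ∈ N)
    (hfin : Finite (Dˣ ⧸ N))
    (a b : Dˣ) (ha : a ∉ N) (hb : b ∉ N)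
    (hd : distGT (commGraph (Dˣ ⧸ N)) (QuotientGroup.mk a) (QuotientGroup.mk b) 4)
    (hsub : nSet N (a : D) ⊆ nSet N (b : D)) :
    -- (1)
    ((1 : D) ∈ nSet N (a : D) →
      (1 : D) ∈ nSet N (b : D) ∧ (-1 : D) ∈ nSet N (b : D)) ∧
    -- (2)
    (∀ n ∈ unitsSet N \ nSet N (b : D),
      nSet N (a : D) ⊆ nSet N ((a : D) + n) ∧
      (Neg.neg '' nSet N (a : D)) ⊆ nSet N ((b : D) + n) ∧
      nSet N (a : D) ⊆ nSet N ((b : D) + n)) := by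
  have hneg1 : (-1 : Dˣ) ∈ N := neg_one_mem N hF
  set av : D := (a : D) with hav
  set bv : D := (b : D) with hbv
  have hav0 : av ≠ 0 := a.ne_zero
  have hbv0 : bv ≠ 0 := b.ne_zero
  have havN : av ∉ unitsSet N := fun h => ha ((coe_mem_unitsSet_iff N).mp h)
  have hbvN : bv ∉ unitsSet N := fun h => hb ((coe_mem_unitsSet_iff N).mp h)
  have hA1 : (QuotientGroup.mk a : Dˣ ⧸ N) ≠ 1 :=
    fun h => ha ((QuotientGroup.eq_one_iff a).mp h)
  have hB1 : (QuotientGroup.mk b : Dˣ ⧸ N) ≠ 1 :=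
    fun h => hb ((QuotientGroup.eq_one_iff b).mp h)
  -- nonzero helper
  have add_nz : ∀ x w : D, x ∉ unitsSet N → w ∈ unitsSet N → x + w ≠ 0 := by
    intro x w hx hw h0
    have : x = -w := by linear_combination (norm := abel) h0
    exact hx (this ▸ unitsSet_neg N hneg1 hw)
  have hsub' : ∀ x : D, x ∈ unitsSet N → av + x ∈ unitsSet N →
      bv + x ∈ unitsSet N := fun x h1 h2 => (hsub ⟨h1, h2⟩).2
  -- the key fact: for m₀ ∈ N(a), b - a - m₀ ∈ N
  have hkappa : ∀ m0 : D, m0 ∈ nSet N av → bv - av - m0 ∈ unitsSet N := by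
    intro m0 hm
    have h1 : (-(av + m0)) ∈ unitsSet N := unitsSet_neg N hneg1 hm.2
    have h2 : av + (-(av + m0)) ∈ unitsSet N := by
      have : av + (-(av + m0)) = -m0 := by abel
      rw [this]; exact unitsSet_neg N hneg1 hm.1
    have h3 := hsub' _ h1 h2
    have : bv + (-(av + m0)) = bv - av - m0 := by abel
    rwa [this] at h3
  -- (2b₀): -N(a) ⊆ N(b)
  have h2b0 : ∀ m0 : D, m0 ∈ nSet N av → bv - m0 ∈ unitsSet N := by
    intro m0 hm
    by_contra hc
    have hbm0 : bv - m0 ≠ 0 := by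
      rw [sub_eq_add_neg]
      exact add_nz _ _ hbvN (unitsSet_neg N hneg1 hm.1)
    have hx1 : clq N (bv - m0) ≠ 1 := clq_ne_one N hbm0 hc
    -- edge a ~ (b - m0): (b - m0) - a = (b - a - m0) ∈ N
    have e0 : clq N av * clq N (bv - m0) = clq N (bv - m0) * clq N av := by
      have hmem : (bv - m0) - av ∈ unitsSet N := by
        have : (bv - m0) - av = bv - av - m0 := by abel
        rw [this]; exact hkappa m0 hm
      exact (clq_comm_of_sub_mem N hbm0 hav0 hmem).symm
    -- edge (b - m0) ~ b : b - (b - m0) = m0 ∈ N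
    have e3 : clq N (bv - m0) * clq N bv = clq N bv * clq N (bv - m0) := by
      have hmem : bv - (bv - m0) ∈ unitsSet N := by
        have : bv - (bv - m0) = m0 := by abel
        rw [this]; exact hm.1
      exact (clq_comm_of_sub_mem N hbv0 hbm0 hmem).symm
    have e0' : (QuotientGroup.mk a : Dˣ ⧸ N) * clq N (bv - m0)
        = clq N (bv - m0) * QuotientGroup.mk a := by
      rw [← clq_coe N a]; exact e0
    have e3' : clq N (bv - m0) * (QuotientGroup.mk b : Dˣ ⧸ N)
        = QuotientGroup.mk b * clq N (bv - m0) := by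
      rw [← clq_coe N b]; exact e3
    exact no_chain4 hd hA1 hB1 _ _ _ hx1 hx1 hx1 e0' rfl rfl e3'
  refine ⟨?_, ?_⟩
  · -- part (1)
    intro h1
    refine ⟨hsub h1, ?_, ?_⟩
    · exact unitsSet_neg N hneg1 ⟨1, N.one_mem, rfl⟩
    · have := h2b0 1 h1
      have he : bv + (-1 : D) = bv - 1 := by abel
      rw [hbv] at he
      rw [he]
      exact this
  · -- part (2)
    intro n hn
    have hnN : n ∈ unitsSet N := hn.1
    have hbn : bv + n ∉ unitsSet N := fun h => hn.2 ⟨hnN, h⟩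
    have hbn0 : bv + n ≠ 0 := add_nz _ _ hbvN hnN
    have han : av + n ∉ unitsSet N := fun h => hbn (hsub' n hnN h)
    have han0 : av + n ≠ 0 := add_nz _ _ havN hnN
    have hx1an : clq N (av + n) ≠ 1 := clq_ne_one N han0 han
    have hx3bn : clq N (bv + n) ≠ 1 := clq_ne_one N hbn0 hbn
    -- common edges
    have eA : clq N av * clq N (av + n) = clq N (av + n) * clq N av := by
      have hmem : (av + n) - av ∈ unitsSet N := by
        have : (av + n) - av = n := by abel
        rw [this]; exact hnN
      exact (clq_comm_of_sub_mem N han0 hav0 hmem).symm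
    have eB : clq N (bv + n) * clq N bv = clq N bv * clq N (bv + n) := by
      have hmem : (bv + n) - bv ∈ unitsSet N := by
        have : (bv + n) - bv = n := by abel
        rw [this]; exact hnN
      exact clq_comm_of_sub_mem N hbn0 hbv0 hmem
    have eA' : (QuotientGroup.mk a : Dˣ ⧸ N) * clq N (av + n)
        = clq N (av + n) * QuotientGroup.mk a := by
      rw [← clq_coe N a]; exact eA
    have eB' : clq N (bv + n) * (QuotientGroup.mk b : Dˣ ⧸ N)
        = QuotientGroup.mk b * clq N (bv + n) := by
      rw [← clq_coe N b]; exact eB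
    -- L2a : a + n + m0 ∈ N for m0 ∈ N(a)
    have L2a : ∀ m0 : D, m0 ∈ nSet N av → av + n + m0 ∈ unitsSet N := by
      intro m0 hm
      by_contra hc
      have hc0 : av + n + m0 ≠ 0 := add_nz _ _ han hm.1
      have hx2 : clq N (av + n + m0) ≠ 1 := clq_ne_one N hc0 hc
      have e1 : clq N (av + n) * clq N (av + n + m0)
          = clq N (av + n + m0) * clq N (av + n) := by
        have hmem : (av + n + m0) - (av + n) ∈ unitsSet N := by
          have : (av + n + m0) - (av + n) = m0 := by abel
          rw [this]; exact hm.1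
        exact (clq_comm_of_sub_mem N hc0 han0 hmem).symm
      have e2 : clq N (av + n + m0) * clq N (bv + n)
          = clq N (bv + n) * clq N (av + n + m0) := by
        have hmem : (bv + n) - (av + n + m0) ∈ unitsSet N := by
          have : (bv + n) - (av + n + m0) = bv - av - m0 := by abel
          rw [this]; exact hkappa m0 hm
        exact (clq_comm_of_sub_mem N hbn0 hc0 hmem).symm
      exact no_chain4 hd hA1 hB1 _ _ _ hx1an hx2 hx3bn eA' e1 e2 eB'
    -- ¬ MemN (a - n)
    have hannN : av - n ∉ unitsSet N := by
      intro h
      have h1 : n - av ∈ unitsSet N := by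
        have := unitsSet_neg N hneg1 h
        rwa [neg_sub] at this
      have h2 : av + (n - av) ∈ unitsSet N := by
        have : av + (n - av) = n := by abel
        rw [this]; exact hnN
      have h3 := hsub' _ h1 h2
      -- h3 : bv + (n - av) ∈ N, i.e. (bv + n) - av ∈ N : edge a ~ (b+n)
      have e0 : clq N av * clq N (bv + n) = clq N (bv + n) * clq N av := by
        have hmem : (bv + n) - av ∈ unitsSet N := by
          have : (bv + n) - av = bv + (n - av) := by abel
          rw [this]; exact h3
        exact (clq_comm_of_sub_mem N hbn0 hav0 hmem).symm
      have e0' : (QuotientGroup.mk a : Dˣ ⧸ N) * clq N (bv + n)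
          = clq N (bv + n) * QuotientGroup.mk a := by
        rw [← clq_coe N a]; exact e0
      exact no_chain4 hd hA1 hB1 _ _ _ hx3bn hx3bn hx3bn e0' rfl rfl eB'
    have hann0 : av - n ≠ 0 := by
      rw [sub_eq_add_neg]
      exact add_nz _ _ havN (unitsSet_neg N hneg1 hnN)
    have hx1ann : clq N (av - n) ≠ 1 := clq_ne_one N hann0 hannN
    -- edge a ~ (a - n)
    have eAn : (QuotientGroup.mk a : Dˣ ⧸ N) * clq N (av - n)
        = clq N (av - n) * QuotientGroup.mk a := by
      rw [← clq_coe N a]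
      have hmem : av - (av - n) ∈ unitsSet N := by
        have : av - (av - n) = n := by abel
        rw [this]; exact hnN
      exact clq_comm_of_sub_mem N hav0 hann0 hmem
    -- L_omega : a + b + m0 ∈ N for m0 ∈ N(a)
    have Lomega : ∀ m0 : D, m0 ∈ nSet N av → av + bv + m0 ∈ unitsSet N := by
      intro m0 hm
      by_contra hc
      have hbm' : bv + m0 ∈ unitsSet N := hsub' m0 hm.1 hm.2
      have hc0 : av + bv + m0 ≠ 0 := by
        have : av + bv + m0 = av + (bv + m0) := by abel
        rw [this]; exact add_nz _ _ havN hbm'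
      have hx : clq N (av + bv + m0) ≠ 1 := clq_ne_one N hc0 hc
      have e0 : (QuotientGroup.mk a : Dˣ ⧸ N) * clq N (av + bv + m0)
          = clq N (av + bv + m0) * QuotientGroup.mk a := by
        rw [← clq_coe N a]
        have hmem : (av + bv + m0) - av ∈ unitsSet N := by
          have : (av + bv + m0) - av = bv + m0 := by abel
          rw [this]; exact hbm'
        exact (clq_comm_of_sub_mem N hc0 hav0 hmem).symm
      have e3 : clq N (av + bv + m0) * (QuotientGroup.mk b : Dˣ ⧸ N)
          = QuotientGroup.mk b * clq N (av + bv + m0) := by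
        rw [← clq_coe N b]
        have hmem : (av + bv + m0) - bv ∈ unitsSet N := by
          have : (av + bv + m0) - bv = av + m0 := by abel
          rw [this]; exact hm.2
        exact clq_comm_of_sub_mem N hc0 hbv0 hmem
      exact no_chain4 hd hA1 hB1 _ _ _ hx hx hx e0 rfl rfl e3
    -- L2c : b + n + m0 ∈ N for m0 ∈ N(a)
    have L2c : ∀ m0 : D, m0 ∈ nSet N av → bv + n + m0 ∈ unitsSet N := by
      intro m0 hm
      by_contra hc
      have hc0 : bv + n + m0 ≠ 0 := add_nz _ _ hbn hm.1
      have hx2 : clq N (bv + n + m0) ≠ 1 := clq_ne_one N hc0 hc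
      have e1 : clq N (av - n) * clq N (bv + n + m0)
          = clq N (bv + n + m0) * clq N (av - n) := by
        have hmem : (av - n) + (bv + n + m0) ∈ unitsSet N := by
          have : (av - n) + (bv + n + m0) = av + bv + m0 := by abel
          rw [this]; exact Lomega m0 hm
        exact clq_comm_of_add_mem N hneg1 hann0 hc0 hmem
      have e2 : clq N (bv + n + m0) * clq N (bv + n)
          = clq N (bv + n) * clq N (bv + n + m0) := by
        have hmem : (bv + n + m0) - (bv + n) ∈ unitsSet N := by
          have : (bv + n + m0) - (bv + n) = m0 := by abel
          rw [this]; exact hm.1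
        exact clq_comm_of_sub_mem N hc0 hbn0 hmem
      exact no_chain4 hd hA1 hB1 _ _ _ hx1ann hx2 hx3bn eAn e1 e2 eB'
    -- L2b : b + n - m0 ∈ N for m0 ∈ N(a)
    have L2b : ∀ m0 : D, m0 ∈ nSet N av → bv + n - m0 ∈ unitsSet N := by
      intro m0 hm
      by_contra hc
      have hc0 : bv + n - m0 ≠ 0 := by
        rw [sub_eq_add_neg]
        exact add_nz _ _ hbn (unitsSet_neg N hneg1 hm.1)
      have hx2 : clq N (bv + n - m0) ≠ 1 := clq_ne_one N hc0 hc
      have e1 : clq N (av + n) * clq N (bv + n - m0)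
          = clq N (bv + n - m0) * clq N (av + n) := by
        have hmem : (av + n) - (bv + n - m0) ∈ unitsSet N := by
          have h' : (av + n) - (bv + n - m0) = -(bv - av - m0) := by abel
          rw [h']; exact unitsSet_neg N hneg1 (hkappa m0 hm)
        exact clq_comm_of_sub_mem N han0 hc0 hmem
      have e2 : clq N (bv + n - m0) * clq N (bv + n)
          = clq N (bv + n) * clq N (bv + n - m0) := by
        have hmem : (bv + n) - (bv + n - m0) ∈ unitsSet N := by
          have : (bv + n) - (bv + n - m0) = m0 := by abel
          rw [this]; exact hm.1
        exact (clq_comm_of_sub_mem N hbn0 hc0 hmem).symm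
      exact no_chain4 hd hA1 hB1 _ _ _ hx1an hx2 hx3bn eA' e1 e2 eB'
    refine ⟨?_, ?_, ?_⟩
    · intro m0 hm
      exact ⟨hm.1, L2a m0 hm⟩
    · rintro x ⟨m0, hm, rfl⟩
      refine ⟨unitsSet_neg N hneg1 hm.1, ?_⟩
      have he : bv + n + (-m0) = bv + n - m0 := by abel
      show bv + n + (-m0) ∈ unitsSet N
      rw [he]
      exact L2b m0 hm
    · intro m0 hm
      exact ⟨hm.1, L2c m0 hm⟩
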